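/- Unbiasedness of the threshold multi-level Monte Carlo estimator: Let S be a finite nonempty set, p a pmf on S, and M ∈ ℕ. On a probability space let (X_i)_{i ≥ 0} be i.i.d. S-valued random variables with law p, and let N be an ℕ-valued random variable independent of (X_i) with ℙ(N = n) = 2^{−(n+1)} for every n ∈ ℕ. For k ≥ 1 let p̂_k be the empirical pmf of X_1,…,X_k, let p̂^E_k be the empirical pmf of the even-indexed samples X_2, X_4, …, X_{2k}, and let p̂^O_k be the empirical pmf of the odd-indexed samples X_1, X_3, …, X_{2k−1}. Let h be any bounded real-valued function on the set of pmfs on S, and let q_0 denote the point-mass pmf at X_0. Define the estimator Z = h(q_0) + 1{N ≤ M} · 2^{N+1} · ( h(p̂_{2^{N+1}}) − (1/2)·h(p̂^E_{2^N}) − (1/2)·h(p̂^O_{2^N}) ). Then E[Z] = E[ h(p̂_{2^{M+1}}) ]. -/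

import Mathlib

open Finset MeasureTheory ProbabilityTheory

/-- `p` is a probability mass function on the finite nonempty type `S`. -/
def IsPmf {S : Type*} [Fintype S] (p : S → ℝ) : Prop :=
  (∀ s, 0 ≤ p s) ∧ ∑ s, p s = 1

/-- The empirical pmf of the samples `X 1, …, X k`. -/
noncomputable def empPmf {S : Type*} [Fintype S] [DecidableEq S] {Ω : Type*}
    (X : ℕ → Ω → S) (k : ℕ) (ω : Ω) : S → ℝ :=
  fun s => (((Finset.Icc 1 k).filter (fun i => X i ω = s)).card : ℝ) / k

section Gadget

variable {Ω : Type*} [MeasurableSpace Ω] {μ : Measure Ω} [IsProbabilityMeasure μ]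

/-- Integral of a finitely-valued function cut off to a set. -/
lemma tmlmc_gadget {ι : Type*} [Fintype ι] (T : Ω → ι) (P : Ω → Prop)
    [DecidablePred P] (hm : ∀ t, MeasurableSet ({ω | P ω} ∩ T ⁻¹' {t})) (f : ι → ℝ) :
    Integrable (fun ω => if P ω then f (T ω) else 0) μ ∧
      (∫ ω, (if P ω then f (T ω) else 0) ∂μ)
        = ∑ t, f t * (μ ({ω | P ω} ∩ T ⁻¹' {t})).toReal := by
  classical
  have key : (fun ω => if P ω then f (T ω) else 0)
      = fun ω => ∑ t : ι, ({ω | P ω} ∩ T ⁻¹' {t}).indicator (fun _ => f t) ω := by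
    funext ω
    by_cases hω : P ω
    · rw [if_pos hω, Finset.sum_eq_single (T ω)]
      · exact (Set.indicator_of_mem (show ω ∈ {ω : Ω | P ω} ∩ T ⁻¹' {T ω} from ⟨hω, rfl⟩) (fun _ => f (T ω))).symm
      · intro b _ hb
        apply Set.indicator_of_notMem
        rintro ⟨-, hb'⟩
        exact hb (by simpa using hb'.symm)
      · simp
    · rw [if_neg hω]
      symm
      apply Finset.sum_eq_zero
      intro t _
      exact Set.indicator_of_notMem (fun ht => hω ht.1) _
  have hint : ∀ t : ι, Integrable (({ω | P ω} ∩ T ⁻¹' {t}).indicator (fun _ => f t)) μ :=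
    fun t => (integrable_const (f t)).indicator (hm t)
  constructor
  · rw [key]; exact integrable_finset_sum _ (fun t _ => hint t)
  · rw [key, integral_finset_sum _ (fun t _ => hint t)]
    refine Finset.sum_congr rfl fun t _ => ?_
    rw [integral_indicator_const _ (hm t), smul_eq_mul, mul_comm]
    rfl

end Gadget

lemma tmlmc_card_bridge (k : ℕ) (g : ℕ → Prop) [DecidablePred g] :
    ((Finset.Icc 1 k).filter (fun j => g j)).card
      = (Finset.univ.filter (fun i : Fin k => g (i.1 + 1))).card := by
  apply Finset.card_bij
    (fun j hj => (⟨j - 1, by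
      simp only [Finset.mem_filter, Finset.mem_Icc] at hj; omega⟩ : Fin k))
  · intro j hj
    simp only [Finset.mem_filter, Finset.mem_Icc] at hj
    simp only [Finset.mem_filter, Finset.mem_univ, true_and]
    have : j - 1 + 1 = j := by omega
    rw [this]
    exact hj.2
  · intro a ha b hb hab
    simp only [Finset.mem_filter, Finset.mem_Icc] at ha hb
    have := congrArg Fin.val hab
    simp only at this
    omega
  · intro b hb
    simp only [Finset.mem_filter, Finset.mem_univ, true_and] at hb
    refine ⟨b.1 + 1, ?_, ?_⟩
    · simp only [Finset.mem_filter, Finset.mem_Icc]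
      exact ⟨⟨by omega, by omega⟩, hb⟩
    · ext; simp

/-- The empirical pmf of a tuple. -/
noncomputable def empv {S : Type*} [Fintype S] [DecidableEq S] (k : ℕ) (v : Fin k → S) :
    S → ℝ :=
  fun s => ((Finset.univ.filter (fun i => v i = s)).card : ℝ) / k

section Meas

variable {S : Type*} [Fintype S] [Nonempty S] [DecidableEq S]
    [MeasurableSpace S] [MeasurableSingletonClass S]
    {Ω : Type*} [MeasurableSpace Ω] {μ : Measure Ω} [IsProbabilityMeasure μ]
    {p : S → ℝ} {X : ℕ → Ω → S}

lemma tmlmc_measM1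
    (hp : IsPmf p)
    (hXiid : iIndepFun X μ)
    (hXlaw : ∀ i s, μ (X i ⁻¹' {s}) = ENNReal.ofReal (p s))
    {k : ℕ} (e : Fin k → ℕ) (he : Function.Injective e) (v : Fin k → S) :
    μ (⋂ i, X (e i) ⁻¹' {v i}) = ENNReal.ofReal (∏ i, p (v i)) := by
  classical
  set t : Finset ℕ := Finset.univ.image e with ht
  set w : ℕ → S := fun j => if hj : ∃ i, e i = j then v hj.choose
    else Classical.arbitrary S with hwdef
  have hw : ∀ i, w (e i) = v i := by
    intro i
    have hj : ∃ i', e i' = e i := ⟨i, rfl⟩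
    simp only [hwdef, dif_pos hj]
    congr 1
    exact he hj.choose_spec
  have hset : (⋂ i, X (e i) ⁻¹' {v i}) = ⋂ j ∈ t, X j ⁻¹' {w j} := by
    ext ω
    simp only [Set.mem_iInter, Set.mem_preimage, Set.mem_singleton_iff, ht,
      Finset.mem_image, Finset.mem_univ, true_and]
    constructor
    · rintro H j ⟨i, rfl⟩
      rw [hw]; exact H i
    · intro H i
      rw [← hw i]; exact H (e i) ⟨i, rfl⟩
  rw [hset, hXiid.measure_inter_preimage_eq_mul t (sets := fun j => {w j})
    (fun j _ => measurableSet_singleton _)]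
  have h1 : ∀ j ∈ t, μ (X j ⁻¹' {w j}) = ENNReal.ofReal (p (w j)) :=
    fun j _ => hXlaw j (w j)
  rw [Finset.prod_congr rfl h1, ← ENNReal.ofReal_prod_of_nonneg (fun j _ => hp.1 _)]
  congr 1
  rw [ht, Finset.prod_image (fun a _ b _ hab => he hab)]
  exact Finset.prod_congr rfl (fun i _ => by rw [hw])

lemma tmlmc_measM2
    (hp : IsPmf p)
    (hXiid : iIndepFun X μ)
    (hXlaw : ∀ i s, μ (X i ⁻¹' {s}) = ENNReal.ofReal (p s))
    {N : Ω → ℕ}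
    (hNindep : IndepFun N (fun ω i => X i ω) μ)
    (hNlaw : ∀ n : ℕ, μ (N ⁻¹' {n}) = ENNReal.ofReal ((1 / 2 : ℝ) ^ (n + 1)))
    (n : ℕ) {k : ℕ} (e : Fin k → ℕ) (he : Function.Injective e) (v : Fin k → S) :
    μ ({ω | N ω = n} ∩ ⋂ i, X (e i) ⁻¹' {v i})
      = ENNReal.ofReal ((1 / 2 : ℝ) ^ (n + 1)) * ENNReal.ofReal (∏ i, p (v i)) := by
  have hB : MeasurableSet {g : ℕ → S | ∀ i : Fin k, g (e i) = v i} := by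
    have h1 : {g : ℕ → S | ∀ i : Fin k, g (e i) = v i}
        = ⋂ i : Fin k, (fun g : ℕ → S => g (e i)) ⁻¹' {v i} := by
      ext g; simp
    rw [h1]
    exact MeasurableSet.iInter fun i =>
      (measurable_pi_apply (e i)) (measurableSet_singleton (v i))
  have hpre : (fun ω => fun i => X i ω) ⁻¹' {g : ℕ → S | ∀ i : Fin k, g (e i) = v i}
      = ⋂ i, X (e i) ⁻¹' {v i} := by
    ext ω; simp
  have hNn : (N ⁻¹' {n} : Set Ω) = {ω | N ω = n} := rfl
  rw [← hNn, ← hpre,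
    hNindep.measure_inter_preimage_eq_mul _ _ (measurableSet_singleton n) hB,
    hNlaw, hpre, tmlmc_measM1 hp hXiid hXlaw e he v]

end Meas

noncomputable def alphaF {S : Type*} [Fintype S] [DecidableEq S]
    (p : S → ℝ) (h : (S → ℝ) → ℝ) (k : ℕ) : ℝ :=
  ∑ v : Fin k → S, h (empv k v) * ∏ i, p (v i)


/-- Unbiasedness of the threshold multi-level Monte Carlo estimator. -/
theorem tmlmc_unbiased
    {S : Type*} [Fintype S] [Nonempty S] [DecidableEq S]
    [MeasurableSpace S] [MeasurableSingletonClass S]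
    {Ω : Type*} [MeasurableSpace Ω] (μ : Measure Ω) [IsProbabilityMeasure μ]
    (p : S → ℝ) (hp : IsPmf p) (M : ℕ)
    (X : ℕ → Ω → S) (hXmeas : ∀ i, Measurable (X i))
    (hXiid : iIndepFun X μ)
    (hXlaw : ∀ i s, μ (X i ⁻¹' {s}) = ENNReal.ofReal (p s))
    (N : Ω → ℕ) (hNmeas : Measurable N)
    (hNindep : IndepFun N (fun ω i => X i ω) μ)
    (hNlaw : ∀ n : ℕ, μ (N ⁻¹' {n}) = ENNReal.ofReal ((1 / 2 : ℝ) ^ (n + 1)))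
    (h : (S → ℝ) → ℝ) (C : ℝ) (hC : ∀ q : S → ℝ, IsPmf q → |h q| ≤ C) :
    (∫ ω, (h (fun s => if X 0 ω = s then 1 else 0)
        + if N ω ≤ M then
            (2 : ℝ) ^ (N ω + 1) *
              (h (empPmf X (2 ^ (N ω + 1)) ω)
                - (1 / 2) * h (empPmf (fun i => X (2 * i)) (2 ^ N ω) ω)
                - (1 / 2) * h (empPmf (fun i => X (2 * i - 1)) (2 ^ N ω) ω))
          else 0) ∂μ)
      = ∫ ω, h (empPmf X (2 ^ (M + 1)) ω) ∂μ := by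
  classical
  -- cylinder sets are measurable
  have hcyl : ∀ {k : ℕ} (e : Fin k → ℕ) (v : Fin k → S),
      MeasurableSet (⋂ i, X (e i) ⁻¹' {v i}) :=
    fun e v => MeasurableSet.iInter fun i => hXmeas (e i) (measurableSet_singleton (v i))
  have hTpre : ∀ {k : ℕ} (e : Fin k → ℕ) (v : Fin k → S),
      (fun ω => fun i : Fin k => X (e i) ω) ⁻¹' {v} = ⋂ i, X (e i) ⁻¹' {v i} := by
    intro k e v; ext ω
    simp [funext_iff]
  -- first key integral formula
  have key1 : ∀ {k : ℕ} (e : Fin k → ℕ), Function.Injective e → ∀ f : (Fin k → S) → ℝ,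
      Integrable (fun ω => f (fun i => X (e i) ω)) μ ∧
      (∫ ω, f (fun i => X (e i) ω) ∂μ) = ∑ v : Fin k → S, f v * ∏ i, p (v i) := by
    intro k e he f
    have hm : ∀ v : Fin k → S,
        MeasurableSet ({ω | (fun _ : Ω => True) ω}
          ∩ (fun ω => fun i : Fin k => X (e i) ω) ⁻¹' {v}) := by
      intro v
      rw [Set.setOf_true, Set.univ_inter, hTpre e v]
      exact hcyl e v
    obtain ⟨hI, hV⟩ := tmlmc_gadget (μ := μ) (fun ω => fun i : Fin k => X (e i) ω)
      (fun _ : Ω => True) hm f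
    simp only [if_true, Set.setOf_true, Set.univ_inter] at hI hV
    refine ⟨hI, hV.trans ?_⟩
    refine Finset.sum_congr rfl fun v _ => ?_
    rw [hTpre e v, tmlmc_measM1 hp hXiid hXlaw e he v,
      ENNReal.toReal_ofReal (Finset.prod_nonneg fun i _ => hp.1 _)]
  -- second key integral formula
  have key2 : ∀ (n : ℕ) {k : ℕ} (e : Fin k → ℕ), Function.Injective e →
      ∀ f : (Fin k → S) → ℝ,
      Integrable (fun ω => if N ω = n then f (fun i => X (e i) ω) else 0) μ ∧
      (∫ ω, (if N ω = n then f (fun i => X (e i) ω) else 0) ∂μ)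
        = (1 / 2 : ℝ) ^ (n + 1) * ∑ v : Fin k → S, f v * ∏ i, p (v i) := by
    intro n k e he f
    have hm : ∀ v : Fin k → S,
        MeasurableSet ({ω | N ω = n}
          ∩ (fun ω => fun i : Fin k => X (e i) ω) ⁻¹' {v}) := by
      intro v
      rw [hTpre e v]
      exact (hNmeas (measurableSet_singleton n)).inter (hcyl e v)
    obtain ⟨hI, hV⟩ := tmlmc_gadget (μ := μ) (fun ω => fun i : Fin k => X (e i) ω)
      (fun ω => N ω = n) hm f
    refine ⟨hI, hV.trans ?_⟩
    rw [Finset.mul_sum]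
    refine Finset.sum_congr rfl fun v _ => ?_
    rw [hTpre e v, tmlmc_measM2 hp hXiid hXlaw hNindep hNlaw n e he v,
      ENNReal.toReal_mul, ENNReal.toReal_ofReal (by positivity),
      ENNReal.toReal_ofReal (Finset.prod_nonneg fun i _ => hp.1 _)]
    ring
  -- rewriting empirical pmfs
  have hemp : ∀ (Y : ℕ → Ω → S) (k : ℕ) (ω : Ω),
      empPmf Y k ω = empv k (fun i : Fin k => Y (i.1 + 1) ω) := by
    intro Y k ω; funext s
    show (((Finset.Icc 1 k).filter (fun i => Y i ω = s)).card : ℝ) / k = _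
    rw [tmlmc_card_bridge k (fun j => Y j ω = s)]
    rfl
  -- injectivity of the index maps
  have he1 : ∀ k : ℕ, Function.Injective (fun i : Fin k => i.1 + 1) := by
    intro k a b hab
    simp only at hab
    exact Fin.ext (by omega)
  have he2 : ∀ k : ℕ, Function.Injective (fun i : Fin k => 2 * (i.1 + 1)) := by
    intro k a b hab
    simp only at hab
    exact Fin.ext (by omega)
  have he3 : ∀ k : ℕ, Function.Injective (fun i : Fin k => 2 * (i.1 + 1) - 1) := by
    intro k a b hab
    simp only at hab
    exact Fin.ext (by omega)
  -- pointwise decomposition of the integrand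
  have hpt : ∀ ω : Ω, (h (fun s => if X 0 ω = s then 1 else 0)
        + if N ω ≤ M then
            (2 : ℝ) ^ (N ω + 1) *
              (h (empPmf X (2 ^ (N ω + 1)) ω)
                - (1 / 2) * h (empPmf (fun i => X (2 * i)) (2 ^ N ω) ω)
                - (1 / 2) * h (empPmf (fun i => X (2 * i - 1)) (2 ^ N ω) ω))
          else 0)
      = h (empv 1 (fun _ : Fin 1 => X 0 ω))
        + ∑ n ∈ Finset.range (M + 1),
          ((if N ω = n then (2 : ℝ) ^ (n + 1)
              * h (empv (2 ^ (n + 1)) (fun i : Fin (2 ^ (n + 1)) => X (i.1 + 1) ω)) else 0)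
          - (if N ω = n then (2 : ℝ) ^ (n + 1)
              * ((1 / 2 : ℝ) * h (empv (2 ^ n) (fun i : Fin (2 ^ n) => X (2 * (i.1 + 1)) ω))) else 0)
          - (if N ω = n then (2 : ℝ) ^ (n + 1)
              * ((1 / 2 : ℝ) * h (empv (2 ^ n) (fun i : Fin (2 ^ n) => X (2 * (i.1 + 1) - 1) ω))) else 0)) := by
    intro ω
    have h1 : (fun s => if X 0 ω = s then (1 : ℝ) else 0)
        = empv 1 (fun _ : Fin 1 => X 0 ω) := by
      funext s
      by_cases hxs : X 0 ω = s <;> simp [empv, hxs]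
    rw [h1]
    congr 1
    calc (if N ω ≤ M then
            (2 : ℝ) ^ (N ω + 1) *
              (h (empPmf X (2 ^ (N ω + 1)) ω)
                - (1 / 2) * h (empPmf (fun i => X (2 * i)) (2 ^ N ω) ω)
                - (1 / 2) * h (empPmf (fun i => X (2 * i - 1)) (2 ^ N ω) ω))
          else 0)
        = if N ω ∈ Finset.range (M + 1) then
            ((fun n => (2 : ℝ) ^ (n + 1)
              * h (empv (2 ^ (n + 1)) (fun i : Fin (2 ^ (n + 1)) => X (i.1 + 1) ω))
              - (2 : ℝ) ^ (n + 1)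
              * ((1 / 2 : ℝ) * h (empv (2 ^ n) (fun i : Fin (2 ^ n) => X (2 * (i.1 + 1)) ω)))
              - (2 : ℝ) ^ (n + 1)
              * ((1 / 2 : ℝ) * h (empv (2 ^ n) (fun i : Fin (2 ^ n) => X (2 * (i.1 + 1) - 1) ω)))) (N ω))
          else 0 := by
          by_cases hN : N ω ≤ M
          · rw [if_pos hN, if_pos (Finset.mem_range.mpr (Nat.lt_succ_of_le hN))]
            simp only [hemp]
            ring
          · rw [if_neg hN, if_neg (fun hc => hN (Nat.lt_succ_iff.mp (Finset.mem_range.mp hc)))]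
      _ = ∑ n ∈ Finset.range (M + 1),
            (if N ω = n then
              ((2 : ℝ) ^ (n + 1)
                * h (empv (2 ^ (n + 1)) (fun i : Fin (2 ^ (n + 1)) => X (i.1 + 1) ω))
              - (2 : ℝ) ^ (n + 1)
                * ((1 / 2 : ℝ) * h (empv (2 ^ n) (fun i : Fin (2 ^ n) => X (2 * (i.1 + 1)) ω)))
              - (2 : ℝ) ^ (n + 1)
                * ((1 / 2 : ℝ) * h (empv (2 ^ n) (fun i : Fin (2 ^ n) => X (2 * (i.1 + 1) - 1) ω))))
            else 0) := by rw [Finset.sum_ite_eq]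
      _ = ∑ n ∈ Finset.range (M + 1), _ := by
          refine Finset.sum_congr rfl fun n _ => ?_
          by_cases hn : N ω = n <;> simp [hn]
  -- evaluate the pieces
  have hr1 : ∀ (n : ℕ) (x : ℝ), (1 / 2 : ℝ) ^ (n + 1) * ((2 : ℝ) ^ (n + 1) * x) = x := by
    intro n x
    rw [← mul_assoc, ← mul_pow]
    norm_num
  have hI0 : Integrable (fun ω => h (empv 1 (fun _ : Fin 1 => X 0 ω))) μ :=
    (key1 (fun _ : Fin 1 => 0) (fun a b _ => Subsingleton.elim a b)
      (fun v => h (empv 1 v))).1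
  have hV0 : (∫ ω, h (empv 1 (fun _ : Fin 1 => X 0 ω)) ∂μ) = alphaF p h 1 :=
    (key1 (fun _ : Fin 1 => 0) (fun a b _ => Subsingleton.elim a b)
      (fun v => h (empv 1 v))).2
  have hIa : ∀ n : ℕ, Integrable (fun ω => if N ω = n then (2 : ℝ) ^ (n + 1)
      * h (empv (2 ^ (n + 1)) (fun i : Fin (2 ^ (n + 1)) => X (i.1 + 1) ω)) else 0) μ :=
    fun n => (key2 n (fun i : Fin (2 ^ (n + 1)) => i.1 + 1) (he1 _)
      (fun v => (2 : ℝ) ^ (n + 1) * h (empv (2 ^ (n + 1)) v))).1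
  have hIb : ∀ n : ℕ, Integrable (fun ω => if N ω = n then (2 : ℝ) ^ (n + 1)
      * ((1 / 2 : ℝ) * h (empv (2 ^ n) (fun i : Fin (2 ^ n) => X (2 * (i.1 + 1)) ω))) else 0) μ :=
    fun n => (key2 n (fun i : Fin (2 ^ n) => 2 * (i.1 + 1)) (he2 _)
      (fun v => (2 : ℝ) ^ (n + 1) * ((1 / 2 : ℝ) * h (empv (2 ^ n) v)))).1
  have hIc : ∀ n : ℕ, Integrable (fun ω => if N ω = n then (2 : ℝ) ^ (n + 1)
      * ((1 / 2 : ℝ) * h (empv (2 ^ n) (fun i : Fin (2 ^ n) => X (2 * (i.1 + 1) - 1) ω))) else 0) μ :=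
    fun n => (key2 n (fun i : Fin (2 ^ n) => 2 * (i.1 + 1) - 1) (he3 _)
      (fun v => (2 : ℝ) ^ (n + 1) * ((1 / 2 : ℝ) * h (empv (2 ^ n) v)))).1
  have hVa : ∀ n : ℕ, (∫ ω, (if N ω = n then (2 : ℝ) ^ (n + 1)
      * h (empv (2 ^ (n + 1)) (fun i : Fin (2 ^ (n + 1)) => X (i.1 + 1) ω)) else 0) ∂μ)
      = alphaF p h (2 ^ (n + 1)) := by
    intro n
    refine ((key2 n (fun i : Fin (2 ^ (n + 1)) => i.1 + 1) (he1 _)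
      (fun v => (2 : ℝ) ^ (n + 1) * h (empv (2 ^ (n + 1)) v))).2).trans ?_
    simp only [mul_assoc, ← Finset.mul_sum]
    rw [hr1]
    rfl
  have hVb : ∀ n : ℕ, (∫ ω, (if N ω = n then (2 : ℝ) ^ (n + 1)
      * ((1 / 2 : ℝ) * h (empv (2 ^ n) (fun i : Fin (2 ^ n) => X (2 * (i.1 + 1)) ω))) else 0) ∂μ)
      = (1 / 2 : ℝ) * alphaF p h (2 ^ n) := by
    intro n
    refine ((key2 n (fun i : Fin (2 ^ n) => 2 * (i.1 + 1)) (he2 _)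
      (fun v => (2 : ℝ) ^ (n + 1) * ((1 / 2 : ℝ) * h (empv (2 ^ n) v)))).2).trans ?_
    simp only [mul_assoc, ← Finset.mul_sum]
    rw [hr1]
    rfl
  have hVc : ∀ n : ℕ, (∫ ω, (if N ω = n then (2 : ℝ) ^ (n + 1)
      * ((1 / 2 : ℝ) * h (empv (2 ^ n) (fun i : Fin (2 ^ n) => X (2 * (i.1 + 1) - 1) ω))) else 0) ∂μ)
      = (1 / 2 : ℝ) * alphaF p h (2 ^ n) := by
    intro n
    refine ((key2 n (fun i : Fin (2 ^ n) => 2 * (i.1 + 1) - 1) (he3 _)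
      (fun v => (2 : ℝ) ^ (n + 1) * ((1 / 2 : ℝ) * h (empv (2 ^ n) v)))).2).trans ?_
    simp only [mul_assoc, ← Finset.mul_sum]
    rw [hr1]
    rfl
  -- assemble
  have hfun := funext hpt
  have hIn : ∀ n : ℕ, Integrable (fun ω => ((if N ω = n then (2 : ℝ) ^ (n + 1)
          * h (empv (2 ^ (n + 1)) (fun i : Fin (2 ^ (n + 1)) => X (i.1 + 1) ω)) else 0)
        - (if N ω = n then (2 : ℝ) ^ (n + 1)
          * ((1 / 2 : ℝ) * h (empv (2 ^ n) (fun i : Fin (2 ^ n) => X (2 * (i.1 + 1)) ω))) else 0)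
        - (if N ω = n then (2 : ℝ) ^ (n + 1)
          * ((1 / 2 : ℝ) * h (empv (2 ^ n) (fun i : Fin (2 ^ n) => X (2 * (i.1 + 1) - 1) ω))) else 0))) μ :=
    fun n => ((hIa n).sub (hIb n)).sub (hIc n)
  have hS : Integrable (fun ω => ∑ n ∈ Finset.range (M + 1), ((if N ω = n then (2 : ℝ) ^ (n + 1)
          * h (empv (2 ^ (n + 1)) (fun i : Fin (2 ^ (n + 1)) => X (i.1 + 1) ω)) else 0)
        - (if N ω = n then (2 : ℝ) ^ (n + 1)
          * ((1 / 2 : ℝ) * h (empv (2 ^ n) (fun i : Fin (2 ^ n) => X (2 * (i.1 + 1)) ω))) else 0)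
        - (if N ω = n then (2 : ℝ) ^ (n + 1)
          * ((1 / 2 : ℝ) * h (empv (2 ^ n) (fun i : Fin (2 ^ n) => X (2 * (i.1 + 1) - 1) ω))) else 0))) μ :=
    integrable_finset_sum _ (fun n _ => hIn n)
  have step1 : (∫ ω, (h (empv 1 (fun _ : Fin 1 => X 0 ω))
        + ∑ n ∈ Finset.range (M + 1), ((if N ω = n then (2 : ℝ) ^ (n + 1)
          * h (empv (2 ^ (n + 1)) (fun i : Fin (2 ^ (n + 1)) => X (i.1 + 1) ω)) else 0)
        - (if N ω = n then (2 : ℝ) ^ (n + 1)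
          * ((1 / 2 : ℝ) * h (empv (2 ^ n) (fun i : Fin (2 ^ n) => X (2 * (i.1 + 1)) ω))) else 0)
        - (if N ω = n then (2 : ℝ) ^ (n + 1)
          * ((1 / 2 : ℝ) * h (empv (2 ^ n) (fun i : Fin (2 ^ n) => X (2 * (i.1 + 1) - 1) ω))) else 0))) ∂μ)
      = (∫ ω, h (empv 1 (fun _ : Fin 1 => X 0 ω)) ∂μ)
        + ∫ ω, (∑ n ∈ Finset.range (M + 1), ((if N ω = n then (2 : ℝ) ^ (n + 1)
          * h (empv (2 ^ (n + 1)) (fun i : Fin (2 ^ (n + 1)) => X (i.1 + 1) ω)) else 0)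
        - (if N ω = n then (2 : ℝ) ^ (n + 1)
          * ((1 / 2 : ℝ) * h (empv (2 ^ n) (fun i : Fin (2 ^ n) => X (2 * (i.1 + 1)) ω))) else 0)
        - (if N ω = n then (2 : ℝ) ^ (n + 1)
          * ((1 / 2 : ℝ) * h (empv (2 ^ n) (fun i : Fin (2 ^ n) => X (2 * (i.1 + 1) - 1) ω))) else 0))) ∂μ :=
    integral_add hI0 hS
  have step2 : (∫ ω, (∑ n ∈ Finset.range (M + 1), ((if N ω = n then (2 : ℝ) ^ (n + 1)
          * h (empv (2 ^ (n + 1)) (fun i : Fin (2 ^ (n + 1)) => X (i.1 + 1) ω)) else 0)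
        - (if N ω = n then (2 : ℝ) ^ (n + 1)
          * ((1 / 2 : ℝ) * h (empv (2 ^ n) (fun i : Fin (2 ^ n) => X (2 * (i.1 + 1)) ω))) else 0)
        - (if N ω = n then (2 : ℝ) ^ (n + 1)
          * ((1 / 2 : ℝ) * h (empv (2 ^ n) (fun i : Fin (2 ^ n) => X (2 * (i.1 + 1) - 1) ω))) else 0))) ∂μ)
      = ∑ n ∈ Finset.range (M + 1), ∫ ω, ((if N ω = n then (2 : ℝ) ^ (n + 1)
          * h (empv (2 ^ (n + 1)) (fun i : Fin (2 ^ (n + 1)) => X (i.1 + 1) ω)) else 0)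
        - (if N ω = n then (2 : ℝ) ^ (n + 1)
          * ((1 / 2 : ℝ) * h (empv (2 ^ n) (fun i : Fin (2 ^ n) => X (2 * (i.1 + 1)) ω))) else 0)
        - (if N ω = n then (2 : ℝ) ^ (n + 1)
          * ((1 / 2 : ℝ) * h (empv (2 ^ n) (fun i : Fin (2 ^ n) => X (2 * (i.1 + 1) - 1) ω))) else 0)) ∂μ :=
    integral_finset_sum _ (fun n _ => hIn n)
  rw [hfun, step1, step2, hV0]
  have hVn : ∀ n ∈ Finset.range (M + 1),
      (∫ ω, ((if N ω = n then (2 : ℝ) ^ (n + 1)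
          * h (empv (2 ^ (n + 1)) (fun i : Fin (2 ^ (n + 1)) => X (i.1 + 1) ω)) else 0)
        - (if N ω = n then (2 : ℝ) ^ (n + 1)
          * ((1 / 2 : ℝ) * h (empv (2 ^ n) (fun i : Fin (2 ^ n) => X (2 * (i.1 + 1)) ω))) else 0)
        - (if N ω = n then (2 : ℝ) ^ (n + 1)
          * ((1 / 2 : ℝ) * h (empv (2 ^ n) (fun i : Fin (2 ^ n) => X (2 * (i.1 + 1) - 1) ω))) else 0)) ∂μ)
      = alphaF p h (2 ^ (n + 1)) - alphaF p h (2 ^ n) := by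
    intro n _
    have s1 : (∫ ω, ((if N ω = n then (2 : ℝ) ^ (n + 1)
          * h (empv (2 ^ (n + 1)) (fun i : Fin (2 ^ (n + 1)) => X (i.1 + 1) ω)) else 0) - (if N ω = n then (2 : ℝ) ^ (n + 1)
          * ((1 / 2 : ℝ) * h (empv (2 ^ n) (fun i : Fin (2 ^ n) => X (2 * (i.1 + 1)) ω))) else 0) - (if N ω = n then (2 : ℝ) ^ (n + 1)
          * ((1 / 2 : ℝ) * h (empv (2 ^ n) (fun i : Fin (2 ^ n) => X (2 * (i.1 + 1) - 1) ω))) else 0)) ∂μ)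
        = (∫ ω, ((if N ω = n then (2 : ℝ) ^ (n + 1)
          * h (empv (2 ^ (n + 1)) (fun i : Fin (2 ^ (n + 1)) => X (i.1 + 1) ω)) else 0) - (if N ω = n then (2 : ℝ) ^ (n + 1)
          * ((1 / 2 : ℝ) * h (empv (2 ^ n) (fun i : Fin (2 ^ n) => X (2 * (i.1 + 1)) ω))) else 0)) ∂μ) - ∫ ω, (if N ω = n then (2 : ℝ) ^ (n + 1)
          * ((1 / 2 : ℝ) * h (empv (2 ^ n) (fun i : Fin (2 ^ n) => X (2 * (i.1 + 1) - 1) ω))) else 0) ∂μ :=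
      integral_sub ((hIa n).sub (hIb n)) (hIc n)
    have s2 : (∫ ω, ((if N ω = n then (2 : ℝ) ^ (n + 1)
          * h (empv (2 ^ (n + 1)) (fun i : Fin (2 ^ (n + 1)) => X (i.1 + 1) ω)) else 0) - (if N ω = n then (2 : ℝ) ^ (n + 1)
          * ((1 / 2 : ℝ) * h (empv (2 ^ n) (fun i : Fin (2 ^ n) => X (2 * (i.1 + 1)) ω))) else 0)) ∂μ)
        = (∫ ω, (if N ω = n then (2 : ℝ) ^ (n + 1)
          * h (empv (2 ^ (n + 1)) (fun i : Fin (2 ^ (n + 1)) => X (i.1 + 1) ω)) else 0) ∂μ) - ∫ ω, (if N ω = n then (2 : ℝ) ^ (n + 1)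
          * ((1 / 2 : ℝ) * h (empv (2 ^ n) (fun i : Fin (2 ^ n) => X (2 * (i.1 + 1)) ω))) else 0) ∂μ :=
      integral_sub (hIa n) (hIb n)
    rw [s1, s2, hVa n, hVb n, hVc n]
    ring
  rw [Finset.sum_congr rfl hVn]
  have tele : (∑ n ∈ Finset.range (M + 1),
      (alphaF p h (2 ^ (n + 1)) - alphaF p h (2 ^ n)))
      = alphaF p h (2 ^ (M + 1)) - alphaF p h (2 ^ 0) :=
    Finset.sum_range_sub (fun m => alphaF p h (2 ^ m)) (M + 1)
  rw [tele]
  have hVR : (∫ ω, h (empPmf X (2 ^ (M + 1)) ω) ∂μ) = alphaF p h (2 ^ (M + 1)) := by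
    simp only [hemp]
    exact (key1 (fun i : Fin (2 ^ (M + 1)) => i.1 + 1) (he1 _)
      (fun v => h (empv (2 ^ (M + 1)) v))).2
  rw [hVR, pow_zero]
  ring
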